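/- Consider the unit sphere S^{n−1} ⊂ ℝ^n and the map Ω: TS^{n−1} → so(n) ≅ Λ²ℝ^n given by Ω(p,v) = p ∧ v (i.e., the skew-symmetric matrix pv^t − vp^t). Then Ω is a virtual immersion: ⟨Ω(p,v), Ω(p,w)⟩ = ⟨v,w⟩ for all p ∈ S^{n−1} and v,w ⊥ p (with the appropriately normalized inner product on Λ²ℝ^n), and ⟨dΩ(X,Y), Ω(Z)⟩ = 0 for all tangent vector fields X,Y,Z. -/

import Mathlib

open RealInnerProductSpace Matrix

/-- `x ∧ y ∈ Λ²ℝⁿ ≅ so(n)`, identified with the skew-symmetric matrix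
`x yᵗ - y xᵗ`. -/
noncomputable def wedgeMat {n : ℕ} (x y : EuclideanSpace ℝ (Fin n)) :
    Matrix (Fin n) (Fin n) ℝ :=
  Matrix.vecMulVec x y - Matrix.vecMulVec y x

/-- The inner product on `Λ²ℝⁿ ≅ so(n)`, normalized so that
`⟨x∧y, u∧v⟩ = ⟨x,u⟩⟨y,v⟩ - ⟨x,v⟩⟨y,u⟩`. -/
noncomputable def ipMat {n : ℕ} (A B : Matrix (Fin n) (Fin n) ℝ) : ℝ :=
  (1 / 2) * (Aᵀ * B).trace

lemma dsum_factor {n : ℕ} (a b c d : EuclideanSpace ℝ (Fin n)) :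
    ∑ j : Fin n, ∑ i : Fin n, (a i * b j) * (c i * d j)
      = (∑ i, a i * c i) * (∑ j, b j * d j) := by
  rw [Finset.sum_comm, Finset.sum_mul_sum]
  exact Finset.sum_congr rfl fun i _ => Finset.sum_congr rfl fun j _ => by ring

lemma ip_wedge {n : ℕ} (x y u v : EuclideanSpace ℝ (Fin n)) :
    ipMat (wedgeMat x y) (wedgeMat u v) = ⟪x,u⟫*⟪y,v⟫ - ⟪x,v⟫*⟪y,u⟫ := by
  simp only [ipMat, wedgeMat, Matrix.trace, Matrix.diag_apply, Matrix.mul_apply,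
    Matrix.transpose_apply, Matrix.sub_apply, Matrix.vecMulVec_apply,
    PiLp.inner_apply, RCLike.inner_apply, conj_trivial]
  have expand : ∑ j : Fin n, ∑ i : Fin n,
        (x i * y j - y i * x j) * (u i * v j - v i * u j)
      = (∑ i, x i * u i) * (∑ j, y j * v j) + (∑ i, y i * v i) * (∑ j, x j * u j)
        - ((∑ i, x i * v i) * (∑ j, y j * u j) + (∑ i, y i * u i) * (∑ j, x j * v j)) := by
    calc ∑ j : Fin n, ∑ i : Fin n, (x i * y j - y i * x j) * (u i * v j - v i * u j)
        = ∑ j : Fin n, ∑ i : Fin n, ((x i * y j) * (u i * v j) + (y i * x j) * (v i * u j)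
            - ((x i * y j) * (v i * u j) + (y i * x j) * (u i * v j))) :=
          Finset.sum_congr rfl fun j _ => Finset.sum_congr rfl fun i _ => by ring
      _ = _ := by
          simp only [Finset.sum_add_distrib, Finset.sum_sub_distrib,
            dsum_factor x y u v, dsum_factor y x v u, dsum_factor x y v u,
            dsum_factor y x u v]
  have e : ∀ a b : EuclideanSpace ℝ (Fin n), ∑ i, a i * b i = ∑ i, b i * a i :=
    fun a b => Finset.sum_congr rfl fun i _ => mul_comm _ _
  rw [expand, e u x, e v y, e v x, e u y]; ring

/-- the map `Ω(p,v) = p ∧ v` on the unit sphere `S^{n-1} ⊂ ℝⁿ`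
is a virtual immersion:
(a) `⟨Ω(p,v), Ω(p,w)⟩ = ⟨v,w⟩` for `p` a unit vector and `v, w ⊥ p`;
(b) `⟨dΩ(X,Y), Ω(Z)⟩ = 0` for tangent vectors `X, Y, Z` at `p`.  (Pointwise,
for tangent vector fields `X, Y` extended to `ℝⁿ`, the Leibniz rule gives
`dΩ(X,Y)_p = D_X(Ω Y) - D_Y(Ω X) - Ω([X,Y]) = X_p ∧ Y_p - Y_p ∧ X_p`, since the
`p ∧ ·` terms combine into `p ∧ (∇ᵉ_X Y - ∇ᵉ_Y X - [X,Y]) = 0`.) -/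
theorem stmt11 {n : ℕ} :
    (∀ p v w : EuclideanSpace ℝ (Fin n), ‖p‖ = 1 →
      ⟪v, p⟫ = 0 → ⟪w, p⟫ = 0 →
      ipMat (wedgeMat p v) (wedgeMat p w) = ⟪v, w⟫) ∧
    (∀ p X Y Z : EuclideanSpace ℝ (Fin n), ‖p‖ = 1 →
      ⟪X, p⟫ = 0 → ⟪Y, p⟫ = 0 → ⟪Z, p⟫ = 0 →
      ipMat (wedgeMat X Y - wedgeMat Y X) (wedgeMat p Z) = 0) := by
  constructor
  · intro p v w hp hv hw
    rw [ip_wedge, real_inner_self_eq_norm_sq, hp, hv]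
    ring
  · intro p X Y Z hp hX hY hZ
    have hsub : ipMat (wedgeMat X Y - wedgeMat Y X) (wedgeMat p Z)
        = ipMat (wedgeMat X Y) (wedgeMat p Z) - ipMat (wedgeMat Y X) (wedgeMat p Z) := by
      simp [ipMat, Matrix.transpose_sub, Matrix.sub_mul, mul_sub]
    rw [hsub, ip_wedge, ip_wedge, hX, hY]
    ring
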